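/- For every integer n ≥ 1, ∑_{j=1}^{n} H_{j,2}/((j+1)^2 (j+2)^2) = H_{n,2}^2 − 4H_{n,2} − H_{n,4} + 5 + 2H_{n,2}/(n+2) + 2H_{n,2}/(n+1)^2 + H_{n,2}/(n+2)^2 − 4/(n+1) − 1/(n+1)^2. Consequently, ∑_{j=1}^{n} H_{j,2}/((j+1)^2 (j+2)^2) → π⁴/60 − 2π²/3 + 5 as n → ∞. -/
import Mathlib

open Finset Filter Real Topology

/-- Generalized harmonic number `H (n, m) = ∑_{i=1}^{n} 1/i^m` as a real number. -/
noncomputable def H (n m : ℕ) : ℝ := ∑ i ∈ Finset.Icc 1 n, (1 : ℝ) / (i : ℝ) ^ m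

/-- Apéry's constant `ζ(3) = ∑_{k=1}^{∞} 1/k³`. -/
noncomputable def zeta3 : ℝ := ∑' k : ℕ, 1 / ((k : ℝ) + 1) ^ 3

lemma H_succ (n m : ℕ) : H (n + 1) m = H n m + 1 / ((n : ℝ) + 1) ^ m := by
  unfold H
  rw [Finset.sum_Icc_succ_top (by omega)]
  push_cast
  ring

lemma H_one (m : ℕ) : H 1 m = 1 := by simp [H]

lemma H_range (n m : ℕ) (hm : 1 ≤ m) :
    H n m = ∑ i ∈ Finset.range (n + 1), (1 : ℝ) / (i : ℝ) ^ m := by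
  induction n with
  | zero => simp [H, zero_pow (by omega : m ≠ 0)]
  | succ n ih => rw [H_succ, Finset.sum_range_succ, ← ih]; push_cast; ring

lemma part1 : ∀ n : ℕ, 1 ≤ n →
      ∑ j ∈ Finset.Icc 1 n, H j 2 / (((j : ℝ) + 1) ^ 2 * ((j : ℝ) + 2) ^ 2) =
        (H n 2) ^ 2 - 4 * H n 2 - H n 4 + 5
          + 2 * H n 2 / ((n : ℝ) + 2)
          + 2 * H n 2 / ((n : ℝ) + 1) ^ 2
          + H n 2 / ((n : ℝ) + 2) ^ 2
          - 4 / ((n : ℝ) + 1) - 1 / ((n : ℝ) + 1) ^ 2 := by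
  intro n hn
  induction n, hn using Nat.le_induction with
  | base => norm_num [H_one]
  | succ n hn ih =>
    rw [Finset.sum_Icc_succ_top (by omega), ih]
    have h1 : ((n : ℝ) + 1) ≠ 0 := by positivity
    have h2 : ((n : ℝ) + 2) ≠ 0 := by positivity
    have h3 : ((n : ℝ) + 3) ≠ 0 := by positivity
    rw [H_succ n 2, H_succ n 4]
    push_cast
    field_simp
    ring

theorem sum_H2_div_shift1sq_shift2sq :
    (∀ n : ℕ, 1 ≤ n →
      ∑ j ∈ Finset.Icc 1 n, H j 2 / (((j : ℝ) + 1) ^ 2 * ((j : ℝ) + 2) ^ 2) =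
        (H n 2) ^ 2 - 4 * H n 2 - H n 4 + 5
          + 2 * H n 2 / ((n : ℝ) + 2)
          + 2 * H n 2 / ((n : ℝ) + 1) ^ 2
          + H n 2 / ((n : ℝ) + 2) ^ 2
          - 4 / ((n : ℝ) + 1) - 1 / ((n : ℝ) + 1) ^ 2) ∧
    Tendsto (fun n : ℕ =>
        ∑ j ∈ Finset.Icc 1 n, H j 2 / (((j : ℝ) + 1) ^ 2 * ((j : ℝ) + 2) ^ 2))
      atTop (nhds (π ^ 4 / 60 - 2 * π ^ 2 / 3 + 5)) := by
  refine ⟨part1, ?_⟩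
  have hH : ∀ m : ℕ, 1 ≤ m → ∀ S : ℝ, HasSum (fun k : ℕ => (1 : ℝ) / (k : ℝ) ^ m) S →
      Tendsto (fun n : ℕ => H n m) atTop (nhds S) := by
    intro m hm S hS
    have := hS.tendsto_sum_nat
    have h2 := this.comp (tendsto_add_atTop_nat 1)
    refine h2.congr fun n => ?_
    simp only [Function.comp]
    exact (H_range n m hm).symm
  have hA := hH 2 (by omega) _ hasSum_zeta_two
  have hB := hH 4 (by omega) _ hasSum_zeta_four
  have hx : Tendsto (fun n : ℕ => 1 / ((n : ℝ) + 1)) atTop (nhds 0) :=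
    tendsto_one_div_add_atTop_nhds_zero_nat
  have hy : Tendsto (fun n : ℕ => 1 / ((n : ℝ) + 2)) atTop (nhds 0) := by
    refine (hx.comp (tendsto_add_atTop_nat 1)).congr fun n => ?_
    simp only [Function.comp]
    push_cast
    ring_nf
  have hT : Tendsto (fun n : ℕ =>
      (H n 2) ^ 2 - 4 * H n 2 - H n 4 + 5
        + 2 * H n 2 * (1 / ((n : ℝ) + 2))
        + 2 * H n 2 * (1 / ((n : ℝ) + 1)) ^ 2
        + H n 2 * (1 / ((n : ℝ) + 2)) ^ 2
        - 4 * (1 / ((n : ℝ) + 1)) - (1 / ((n : ℝ) + 1)) ^ 2) atTop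
      (nhds ((π ^ 2 / 6) ^ 2 - 4 * (π ^ 2 / 6) - π ^ 4 / 90 + 5
        + 2 * (π ^ 2 / 6) * 0 + 2 * (π ^ 2 / 6) * 0 ^ 2 + (π ^ 2 / 6) * 0 ^ 2
        - 4 * 0 - 0 ^ 2)) := by
    exact ((((((((hA.pow 2).sub (hA.const_mul 4)).sub hB).add tendsto_const_nhds).add
      ((hA.const_mul 2).mul hy)).add ((hA.const_mul 2).mul (hx.pow 2))).add
      (hA.mul (hy.pow 2))).sub (hx.const_mul 4)).sub (hx.pow 2)
  have hval : (π ^ 2 / 6) ^ 2 - 4 * (π ^ 2 / 6) - π ^ 4 / 90 + 5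
        + 2 * (π ^ 2 / 6) * 0 + 2 * (π ^ 2 / 6) * 0 ^ 2 + (π ^ 2 / 6) * 0 ^ 2
        - 4 * 0 - 0 ^ 2 = π ^ 4 / 60 - 2 * π ^ 2 / 3 + 5 := by ring
  rw [hval] at hT
  apply hT.congr'
  filter_upwards [eventually_ge_atTop 1] with n hn
  rw [part1 n hn]
  have h1 : ((n : ℝ) + 1) ≠ 0 := by positivity
  have h2 : ((n : ℝ) + 2) ≠ 0 := by positivity
  field_simp
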